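/- Let i ≥ 2. In the ring S_i, the annihilator of the maximal ideal 𝔫_i = (x, y_1, …, y_i) is equal to the ideal generated by the elements x·y_1, x·y_2, …, x·y_i (equivalently, ann(𝔫_i) = 𝔫_i²). -/

import Mathlib

set_option synthInstance.maxHeartbeats 1000000
set_option maxHeartbeats 1000000

open MvPolynomial

noncomputable section

/-- The defining ideal `(X², (Y₁,…,Y_i)²)` of `S_i` in `k[X,Y₁,…,Y_i]`;
the variable `X 0` plays the role of `X` and `X j.succ` the role of `Y_j`. -/
abbrev SIdeal (k : Type) [Field k] (i : ℕ) : Ideal (MvPolynomial (Fin (i + 1)) k) :=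
  Ideal.span ({X 0 ^ 2} ∪ {p | ∃ a b : Fin i, p = X a.succ * X b.succ})

/-- `S_i = k[X,Y₁,…,Y_i]/(X², (Y₁,…,Y_i)²)`. -/
abbrev Sring (k : Type) [Field k] (i : ℕ) := MvPolynomial (Fin (i + 1)) k ⧸ SIdeal k i

/-- `x`, the residue class of `X` in `S_i`. -/
abbrev xS (k : Type) [Field k] (i : ℕ) : Sring k i := Ideal.Quotient.mk _ (X 0)

/-- `y_j`, the residue class of `Y_j` in `S_i`. -/
abbrev yS (k : Type) [Field k] (i : ℕ) (j : Fin i) : Sring k i :=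
  Ideal.Quotient.mk _ (X j.succ)

/-- The maximal ideal `𝔫_i = (x, y₁, …, y_i)` of `S_i`. -/
abbrev nS (k : Type) [Field k] (i : ℕ) : Ideal (Sring k i) :=
  Ideal.span ({xS k i} ∪ Set.range (yS k i))

namespace Stmt0Aux

variable {k : Type} [Field k] {i : ℕ}

/-- sum of exponents of the `Y` variables -/
def sumSucc (m : Fin (i + 1) →₀ ℕ) : ℕ := ∑ s : Fin i, m s.succ

lemma sumSucc_add (m n : Fin (i + 1) →₀ ℕ) : sumSucc (m + n) = sumSucc m + sumSucc n := by
  simp [sumSucc, Finset.sum_add_distrib]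

lemma sumSucc_single_zero (t : ℕ) : sumSucc (Finsupp.single (0 : Fin (i+1)) t) = 0 := by
  simp [sumSucc, Finsupp.single_apply, (Fin.succ_ne_zero _).symm]

lemma sumSucc_single_succ (j : Fin i) (t : ℕ) :
    sumSucc (Finsupp.single (j.succ : Fin (i+1)) t) = t := by
  rw [sumSucc]
  rw [Finset.sum_eq_single j]
  · simp
  · intro b _ hb
    rw [Finsupp.single_apply, if_neg (by simpa [Fin.succ_inj] using (Ne.symm hb))]
  · simp

lemma sumSucc_mono {m n : Fin (i + 1) →₀ ℕ} (h : m ≤ n) : sumSucc m ≤ sumSucc n :=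
  Finset.sum_le_sum fun s _ => h s.succ

lemma pair_le_ne {m : Fin (i+1) →₀ ℕ} {c d : Fin (i+1)} (hc : 1 ≤ m c) (hd : 1 ≤ m d)
    (hne : c ≠ d) : Finsupp.single c 1 + Finsupp.single d 1 ≤ m := by
  intro x
  rcases eq_or_ne x c with rfl | hxc
  · simpa [Finsupp.single_apply, hne, Ne.symm hne] using hc
  · rcases eq_or_ne x d with rfl | hxd
    · simpa [Finsupp.single_apply, hne, Ne.symm hxc] using hd
    · simp [Finsupp.single_apply, Ne.symm hxc, Ne.symm hxd]

lemma bad_mem {m : Fin (i + 1) →₀ ℕ} (c : k)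
    (h : 2 ≤ m 0 ∨ 2 ≤ sumSucc m) : monomial m c ∈ SIdeal k i := by
  rcases h with h | h
  · have hle : Finsupp.single (0 : Fin (i+1)) 2 ≤ m := Finsupp.single_le_iff.2 h
    have hm : Finsupp.single (0 : Fin (i+1)) 2 + (m - Finsupp.single 0 2) = m :=
      add_tsub_cancel_of_le hle
    have : monomial m c = X (0 : Fin (i+1)) ^ 2 * monomial (m - Finsupp.single 0 2) c := by
      rw [X_pow_eq_monomial, monomial_mul, one_mul, hm]
    rw [this]
    exact Ideal.mul_mem_right _ _ (Ideal.subset_span (Or.inl rfl))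
  · -- find a, b with single a.succ 1 + single b.succ 1 ≤ m
    obtain ⟨a, b, hab⟩ : ∃ a b : Fin i,
        Finsupp.single (a.succ : Fin (i+1)) 1 + Finsupp.single (b.succ : Fin (i+1)) 1 ≤ m := by
      have ha : ∃ a : Fin i, 1 ≤ m a.succ := by
        by_contra hcon
        push_neg at hcon
        have : sumSucc m = 0 := Finset.sum_eq_zero fun s _ => by have := hcon s; omega
        omega
      obtain ⟨a, ha⟩ := ha
      by_cases h2 : 2 ≤ m a.succ
      · refine ⟨a, a, ?_⟩
        rw [← Finsupp.single_add]
        exact Finsupp.single_le_iff.2 h2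
      · have hma : m a.succ = 1 := by omega
        have hsplit : m a.succ + ∑ s ∈ Finset.univ.erase a, m s.succ =
            ∑ s : Fin i, m s.succ :=
          by simpa using Finset.add_sum_erase Finset.univ (fun s : Fin i => m s.succ) (Finset.mem_univ a)
        have hsum : ∑ s ∈ Finset.univ.erase a, m s.succ ≥ 1 := by
          rw [sumSucc] at h
          omega
        obtain ⟨b, hb, hb1⟩ : ∃ b ∈ Finset.univ.erase a, 1 ≤ m b.succ := by
          by_contra hcon
          push_neg at hcon
          have : ∑ s ∈ Finset.univ.erase a, m s.succ = 0 :=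
            Finset.sum_eq_zero fun s hs => by have := hcon s hs; omega
          omega
        have hba : b ≠ a := Finset.ne_of_mem_erase hb
        have hne : (a.succ : Fin (i+1)) ≠ b.succ := by
          simpa [Fin.succ_inj] using Ne.symm hba
        exact ⟨a, b, pair_le_ne ha hb1 hne⟩
    set v : Fin (i+1) →₀ ℕ := Finsupp.single a.succ 1 + Finsupp.single b.succ 1 with hv
    have hm : v + (m - v) = m := add_tsub_cancel_of_le hab
    have : monomial m c = (X (a.succ : Fin (i+1)) * X b.succ) * monomial (m - v) c := by
      rw [X, X, monomial_mul, monomial_mul, one_mul, one_mul, hm]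
    rw [this]
    exact Ideal.mul_mem_right _ _ (Ideal.subset_span (Or.inr ⟨a, b, rfl⟩))

lemma mem_of_support_bad {p : MvPolynomial (Fin (i + 1)) k}
    (h : ∀ m ∈ p.support, 2 ≤ m 0 ∨ 2 ≤ sumSucc m) : p ∈ SIdeal k i := by
  rw [p.as_sum]
  exact Ideal.sum_mem _ fun m hm => bad_mem _ (h m hm)

lemma good_coeff_zero {p : MvPolynomial (Fin (i + 1)) k} (hp : p ∈ SIdeal k i)
    {m : Fin (i + 1) →₀ ℕ} (h0 : m 0 ≤ 1) (h1 : sumSucc m ≤ 1) : coeff m p = 0 := by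
  induction hp using Submodule.span_induction generalizing m with
  | mem g hg =>
    rcases hg with hg | ⟨a, b, rfl⟩
    · simp only [Set.mem_singleton_iff] at hg
      subst hg
      rw [X_pow_eq_monomial, coeff_monomial, if_neg]
      rintro rfl
      simp at h0
    · rw [X, X, monomial_mul, one_mul, coeff_monomial, if_neg]
      rintro rfl
      rw [sumSucc_add, sumSucc_single_succ, sumSucc_single_succ] at h1
      omega
  | zero => simp
  | add f g _ _ hf hg => simp [coeff_add, hf h0 h1, hg h0 h1]
  | smul r f _ hf =>
    rw [smul_eq_mul, coeff_mul]
    refine Finset.sum_eq_zero fun uv huv => ?_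
    rw [Finset.HasAntidiagonal.mem_antidiagonal] at huv
    have hle : uv.2 ≤ m := le_add_self.trans (le_of_eq huv)
    have := hf (m := uv.2) (le_trans (hle 0) h0) (le_trans (sumSucc_mono hle) h1)
    simp [this]

lemma classify {m : Fin (i + 1) →₀ ℕ} (h0 : m 0 ≤ 1) (h1 : sumSucc m ≤ 1) :
    m = 0 ∨ m = Finsupp.single 0 1 ∨ (∃ j : Fin i, m = Finsupp.single j.succ 1) ∨
      (∃ j : Fin i, m = Finsupp.single 0 1 + Finsupp.single j.succ 1) := by
  rcases Nat.le_one_iff_eq_zero_or_eq_one.1 h1 with hs | hs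
  · -- all succ coords zero
    have hz : ∀ s : Fin i, m s.succ = 0 := by
      intro s
      have := Finset.sum_eq_zero_iff.1 hs s (Finset.mem_univ s)
      exact this
    rcases Nat.le_one_iff_eq_zero_or_eq_one.1 h0 with hm0 | hm0
    · left
      ext a
      induction a using Fin.cases with
      | zero => simpa using hm0
      | succ s => simpa using hz s
    · right; left
      ext a
      induction a using Fin.cases with
      | zero => simp [hm0]
      | succ s => simp [Finsupp.single_apply, (Fin.succ_ne_zero s).symm, hz s]
  · -- exactly one succ coord equal to 1
    obtain ⟨j, hj⟩ : ∃ j : Fin i, 1 ≤ m j.succ := by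
      by_contra hcon
      push_neg at hcon
      have : sumSucc m = 0 := Finset.sum_eq_zero fun s _ => by have := hcon s; omega
      omega
    have hmj : m j.succ = 1 := by
      have hle : m j.succ ≤ sumSucc m :=
        Finset.single_le_sum (f := fun s : Fin i => m s.succ) (fun _ _ => Nat.zero_le _)
          (Finset.mem_univ j)
      omega
    have hz : ∀ s : Fin i, s ≠ j → m s.succ = 0 := by
      intro s hsj
      have hsplit : m j.succ + ∑ t ∈ Finset.univ.erase j, m t.succ =
          ∑ s : Fin i, m s.succ :=
        by simpa using Finset.add_sum_erase Finset.univ (fun s : Fin i => m s.succ) (Finset.mem_univ j)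
      have hzero : ∑ t ∈ Finset.univ.erase j, m t.succ = 0 := by
        rw [sumSucc] at hs; omega
      exact Finset.sum_eq_zero_iff.1 hzero s (Finset.mem_erase.2 ⟨hsj, Finset.mem_univ s⟩)
    rcases Nat.le_one_iff_eq_zero_or_eq_one.1 h0 with hm0 | hm0
    · right; right; left
      refine ⟨j, ?_⟩
      ext a
      induction a using Fin.cases with
      | zero => simp [hm0, Finsupp.single_apply, (Fin.succ_ne_zero j)]
      | succ s =>
        rcases eq_or_ne s j with rfl | hsj
        · simp [hmj]
        · simp [hz s hsj, Finsupp.single_apply, Fin.succ_inj, Ne.symm hsj, hsj]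
    · right; right; right
      refine ⟨j, ?_⟩
      ext a
      induction a using Fin.cases with
      | zero => simp [hm0, Finsupp.single_apply, (Fin.succ_ne_zero j)]
      | succ s =>
        rcases eq_or_ne s j with rfl | hsj
        · simp [hmj, Finsupp.single_apply, Fin.succ_ne_zero, Ne.symm (Fin.succ_ne_zero s)]
        · simp [hz s hsj, Finsupp.single_apply, Fin.succ_inj, Ne.symm hsj, hsj,
            Fin.succ_ne_zero, (Fin.succ_ne_zero s).symm]

end Stmt0Aux

/-- For `i ≥ 2`, the annihilator of the maximal ideal `𝔫_i = (x, y₁, …, y_i)`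
of `S_i` equals the ideal generated by `x·y₁, …, x·y_i`. -/
theorem stmt0 (k : Type) [Field k] [CharZero k] (i : ℕ) (hi : 2 ≤ i) :
    (nS k i).annihilator = Ideal.span (Set.range fun j : Fin i => xS k i * yS k i j) := by
  apply le_antisymm
  · -- annihilator ⊆ span
    intro s hs
    obtain ⟨p, rfl⟩ := Ideal.Quotient.mk_surjective s
    rw [Submodule.mem_annihilator] at hs
    have hxmem : xS k i ∈ nS k i := Ideal.subset_span (Or.inl rfl)
    have hymem : ∀ j, yS k i j ∈ nS k i := fun j => Ideal.subset_span (Or.inr ⟨j, rfl⟩)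
    have hxI : p * X 0 ∈ SIdeal k i := by
      have := hs _ hxmem
      rwa [smul_eq_mul, ← map_mul, Ideal.Quotient.eq_zero_iff_mem] at this
    have hyI : ∀ j : Fin i, p * X j.succ ∈ SIdeal k i := fun j => by
      have := hs _ (hymem j)
      rwa [smul_eq_mul, ← map_mul, Ideal.Quotient.eq_zero_iff_mem] at this
    have hc : coeff 0 p = 0 := by
      have := Stmt0Aux.good_coeff_zero hxI
        (m := 0 + Finsupp.single (0 : Fin (i+1)) 1) (by simp)
        (by rw [zero_add, Stmt0Aux.sumSucc_single_zero]; omega)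
      rwa [coeff_mul_X] at this
    have he : ∀ j : Fin i, coeff (Finsupp.single j.succ 1) p = 0 := fun j => by
      have := Stmt0Aux.good_coeff_zero hxI
        (m := Finsupp.single (j.succ : Fin (i+1)) 1 + Finsupp.single (0 : Fin (i+1)) 1)
        (by simp [Finsupp.single_apply, Fin.succ_ne_zero])
        (by simp [Stmt0Aux.sumSucc_add, Stmt0Aux.sumSucc_single_zero,
          Stmt0Aux.sumSucc_single_succ])
      rwa [coeff_mul_X] at this
    have hd : coeff (Finsupp.single (0 : Fin (i+1)) 1) p = 0 := by
      have j0 : Fin i := ⟨0, by omega⟩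
      have := Stmt0Aux.good_coeff_zero (hyI j0)
        (m := Finsupp.single (0 : Fin (i+1)) 1 + Finsupp.single (j0.succ : Fin (i+1)) 1)
        (by simp [Finsupp.single_apply, Fin.succ_ne_zero, (Fin.succ_ne_zero j0).symm])
        (by simp [Stmt0Aux.sumSucc_add, Stmt0Aux.sumSucc_single_zero,
          Stmt0Aux.sumSucc_single_succ])
      rwa [coeff_mul_X] at this
    have hkey : p - (∑ j : Fin i,
        monomial (Finsupp.single (0 : Fin (i+1)) 1 + Finsupp.single (j.succ : Fin (i+1)) 1)
          (coeff (Finsupp.single (0 : Fin (i+1)) 1 + Finsupp.single (j.succ : Fin (i+1)) 1) p))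
        ∈ SIdeal k i := by
      apply Stmt0Aux.mem_of_support_bad
      intro m hm
      by_contra hbad
      push_neg at hbad
      obtain ⟨hb0, hb1⟩ := hbad
      rw [mem_support_iff] at hm
      apply hm
      rw [coeff_sub, coeff_sum]
      simp only [coeff_monomial]
      rcases Stmt0Aux.classify (m := m) (by omega) (by omega)
        with rfl | rfl | ⟨j, rfl⟩ | ⟨j, rfl⟩
      · rw [hc, Finset.sum_eq_zero, sub_zero]
        intro j _
        rw [if_neg]
        intro hcontra
        have := DFunLike.congr_fun hcontra 0
        simp [Finsupp.single_apply, Fin.succ_ne_zero] at this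
      · rw [hd, Finset.sum_eq_zero, sub_zero]
        intro j _
        rw [if_neg]
        intro hcontra
        have := DFunLike.congr_fun hcontra j.succ
        simp [Finsupp.single_apply, Fin.succ_ne_zero, (Fin.succ_ne_zero j).symm] at this
      · rw [he j, Finset.sum_eq_zero, sub_zero]
        intro l _
        rw [if_neg]
        intro hcontra
        have := DFunLike.congr_fun hcontra 0
        simp [Finsupp.single_apply, Fin.succ_ne_zero, (Fin.succ_ne_zero l).symm,
          (Fin.succ_ne_zero j).symm] at this
      · rw [Finset.sum_eq_single j, if_pos rfl, sub_self]
        · intro l _ hlj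
          rw [if_neg]
          intro hcontra
          have := DFunLike.congr_fun hcontra l.succ
          simp [Finsupp.single_apply, Ne.symm (Fin.succ_ne_zero l), Fin.succ_inj,
            Ne.symm hlj] at this
        · intro hj
          exact absurd (Finset.mem_univ j) hj
    have hmk : Ideal.Quotient.mk (SIdeal k i) p = Ideal.Quotient.mk (SIdeal k i)
        (∑ j : Fin i,
          monomial (Finsupp.single (0 : Fin (i+1)) 1 + Finsupp.single (j.succ : Fin (i+1)) 1)
            (coeff (Finsupp.single (0 : Fin (i+1)) 1 +
              Finsupp.single (j.succ : Fin (i+1)) 1) p)) :=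
      Ideal.Quotient.eq.2 hkey
    rw [hmk, map_sum]
    apply Ideal.sum_mem
    intro j _
    have hmono : (monomial
        (Finsupp.single (0 : Fin (i+1)) 1 + Finsupp.single (j.succ : Fin (i+1)) 1)
        (coeff (Finsupp.single (0 : Fin (i+1)) 1 + Finsupp.single (j.succ : Fin (i+1)) 1) p) :
          MvPolynomial (Fin (i+1)) k)
        = C (coeff (Finsupp.single (0 : Fin (i+1)) 1 +
            Finsupp.single (j.succ : Fin (i+1)) 1) p) * (X 0 * X j.succ) := by
      rw [X, X, monomial_mul, one_mul, C_mul_monomial, mul_one]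
    rw [hmono, map_mul, map_mul]
    exact Ideal.mul_mem_left _ _ (Ideal.subset_span ⟨j, rfl⟩)
  · rw [Ideal.span_le]
    rintro _ ⟨j, rfl⟩
    rw [SetLike.mem_coe, Submodule.mem_annihilator]
    intro n hn
    induction hn using Submodule.span_induction with
    | mem g hg =>
      rcases hg with hg | ⟨l, rfl⟩
      · simp only [Set.mem_singleton_iff] at hg
        subst hg
        show Ideal.Quotient.mk (SIdeal k i) (X (0 : Fin (i+1)) : MvPolynomial (Fin (i+1)) k) * Ideal.Quotient.mk (SIdeal k i) (X (j.succ : Fin (i+1)) : MvPolynomial (Fin (i+1)) k) *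
          Ideal.Quotient.mk (SIdeal k i) (X (0 : Fin (i+1)) : MvPolynomial (Fin (i+1)) k) = 0
        rw [← map_mul, ← map_mul, Ideal.Quotient.eq_zero_iff_mem]
        have h2 : (X 0 * X j.succ * X 0 : MvPolynomial (Fin (i+1)) k) = X 0 ^ 2 * X j.succ := by ring
        rw [h2]
        exact Ideal.mul_mem_right _ _ (Ideal.subset_span (Or.inl rfl))
      · show Ideal.Quotient.mk (SIdeal k i) (X (0 : Fin (i+1)) : MvPolynomial (Fin (i+1)) k) * Ideal.Quotient.mk (SIdeal k i) (X (j.succ : Fin (i+1)) : MvPolynomial (Fin (i+1)) k) *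
          Ideal.Quotient.mk (SIdeal k i) (X (l.succ : Fin (i+1)) : MvPolynomial (Fin (i+1)) k) = 0
        rw [← map_mul, ← map_mul, Ideal.Quotient.eq_zero_iff_mem]
        have h2 : (X 0 * X j.succ * X l.succ : MvPolynomial (Fin (i+1)) k)
            = X j.succ * X l.succ * X 0 := by ring
        rw [h2]
        exact Ideal.mul_mem_right _ _ (Ideal.subset_span (Or.inr ⟨j, l, rfl⟩))
    | zero => simp
    | add a b _ _ ha hb => rw [smul_add, ha, hb, add_zero]
    | smul r nn _ h => rw [smul_comm, h, smul_zero]
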